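/- Locally optimal solutions of BQAP1 under swap and concurrent swap neighborhoods can be arbitrarily bad and worse than the average: for all integers m, n ≥ 2 and all reals L > 0 and ε > 0 with L > 2·m·n·ε, there exist a BQAP1 instance (q, c, d) and a feasible solution (σ0, τ0) such that (i) f1(σ', τ0) ≥ f1(σ0, τ0) for every σ' : Fin m → Fin n, (ii) f1(σ0, τ') ≥ f1(σ0, τ0) for every τ' : Fin n → Fin m (so (σ0,τ0) is locally optimal for both the swap and the concurrent swap neighborhood), (iii) f1(σ0, τ0) = -2·ε, (iv) f1(σ0, τ0) > A1(q,c,d), and (v) there exists a feasible solution (σ, τ) with f1(σ, τ) ≤ -L. -/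

import Mathlib

/-- Objective function of BQAP1. -/
noncomputable def f1 {m n : ℕ} (q : Fin m → Fin n → Fin m → Fin n → ℝ)
    (c d : Fin m → Fin n → ℝ) (σ : Fin m → Fin n) (τ : Fin n → Fin m) : ℝ :=
  (∑ i, ∑ l, q i (σ i) (τ l) l) + (∑ i, c i (σ i)) + (∑ l, d (τ l) l)

/-- Average objective value of BQAP1. -/
noncomputable def A1 {m n : ℕ} (q : Fin m → Fin n → Fin m → Fin n → ℝ)
    (c d : Fin m → Fin n → ℝ) : ℝ :=
  (1 / ((m : ℝ) * n)) * (∑ i, ∑ j, ∑ k, ∑ l, q i j k l)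
    + (1 / (n : ℝ)) * (∑ i, ∑ j, c i j)
    + (1 / (m : ℝ)) * (∑ i, ∑ j, d i j)

lemma sum_if_zero {k : ℕ} (hk : 0 < k) (x y : ℝ) :
    ∑ j : Fin k, (if j = (⟨0, hk⟩ : Fin k) then x else y) = x + ((k : ℝ) - 1) * y := by
  rw [← Finset.add_sum_erase _ _ (Finset.mem_univ (⟨0, hk⟩ : Fin k)), if_pos rfl]
  rw [Finset.sum_congr rfl (fun j hj => if_neg (Finset.ne_of_mem_erase hj)),
    Finset.sum_const, Finset.card_erase_of_mem (Finset.mem_univ _), Finset.card_univ,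
    Fintype.card_fin, nsmul_eq_mul, Nat.cast_sub hk, Nat.cast_one]

theorem swap_local_optimum_arbitrarily_bad_BQAP1 (m n : ℕ) (hm : 2 ≤ m) (hn : 2 ≤ n)
    (L ε : ℝ) (hL : 0 < L) (hε : 0 < ε) (hLε : L > 2 * m * n * ε) :
    ∃ (q : Fin m → Fin n → Fin m → Fin n → ℝ) (c d : Fin m → Fin n → ℝ)
      (σ0 : Fin m → Fin n) (τ0 : Fin n → Fin m),
      (∀ σ' : Fin m → Fin n, f1 q c d σ' τ0 ≥ f1 q c d σ0 τ0) ∧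
      (∀ τ' : Fin n → Fin m, f1 q c d σ0 τ' ≥ f1 q c d σ0 τ0) ∧
      f1 q c d σ0 τ0 = -2 * ε ∧
      f1 q c d σ0 τ0 > A1 q c d ∧
      (∃ (σ : Fin m → Fin n) (τ : Fin n → Fin m), f1 q c d σ τ ≤ -L) := by
  have hm0 : 0 < m := by omega
  have hn0 : 0 < n := by omega
  have hmr : (2:ℝ) ≤ m := by exact_mod_cast hm
  have hnr : (2:ℝ) ≤ n := by exact_mod_cast hn
  have hmn : (0:ℝ) < (m:ℝ) * n := by positivity
  set a : ℝ := -2 * ε / ((m:ℝ) * n) with ha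
  set b : ℝ := -L / ((m:ℝ) * n) with hb
  have ha0 : a ≤ 0 := by
    apply div_nonpos_of_nonpos_of_nonneg <;> nlinarith
  have hb0 : b < 0 := by
    apply div_neg_of_neg_of_pos <;> nlinarith
  set g : Fin n → Fin m → ℝ := fun j k =>
    if j = ⟨0, hn0⟩ then (if k = ⟨0, hm0⟩ then a else 0)
    else (if k = ⟨0, hm0⟩ then 0 else b) with hg
  refine ⟨fun _ j k _ => g j k, 0, 0, fun _ => ⟨0, hn0⟩, fun _ => ⟨0, hm0⟩, ?_, ?_, ?_, ?_, ?_⟩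
  · intro σ'
    simp only [f1, Pi.zero_apply, Finset.sum_const_zero, add_zero, ge_iff_le]
    have h1 : ∀ j : Fin n, a ≤ g j ⟨0, hm0⟩ := by
      intro j
      simp only [hg]
      split <;> split <;> simp_all <;> linarith
    calc ∑ i : Fin m, ∑ l : Fin n, g (⟨0, hn0⟩ : Fin n) ⟨0, hm0⟩
        = ∑ i : Fin m, ∑ l : Fin n, a := by simp [hg]
      _ ≤ ∑ i : Fin m, ∑ l : Fin n, g (σ' i) ⟨0, hm0⟩ := by
          apply Finset.sum_le_sum; intro i _
          apply Finset.sum_le_sum; intro l _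
          exact h1 _
  · intro τ'
    simp only [f1, Pi.zero_apply, Finset.sum_const_zero, add_zero, ge_iff_le]
    have h1 : ∀ k : Fin m, a ≤ g ⟨0, hn0⟩ k := by
      intro k
      simp only [hg, if_pos rfl]
      split <;> simp_all <;> linarith
    calc ∑ i : Fin m, ∑ l : Fin n, g (⟨0, hn0⟩ : Fin n) ⟨0, hm0⟩
        = ∑ i : Fin m, ∑ l : Fin n, a := by simp [hg]
      _ ≤ ∑ i : Fin m, ∑ l : Fin n, g ⟨0, hn0⟩ (τ' l) := by
          apply Finset.sum_le_sum; intro i _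
          apply Finset.sum_le_sum; intro l _
          exact h1 _
  · simp only [f1, Pi.zero_apply, Finset.sum_const_zero, add_zero]
    have : g ⟨0, hn0⟩ ⟨0, hm0⟩ = a := by simp [hg]
    rw [this]
    simp only [Finset.sum_const, Finset.card_univ, Fintype.card_fin, nsmul_eq_mul]
    field_simp [ha]
    rw [ha]; field_simp
  · simp only [f1, A1, Pi.zero_apply, Finset.sum_const_zero, add_zero, mul_zero]
    have hcalc : ∑ j : Fin n, ∑ k : Fin m, g j k = a + ((n:ℝ)-1) * (((m:ℝ)-1) * b) := by
      have hin : ∀ j : Fin n, ∑ k : Fin m, g j k =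
          if j = ⟨0, hn0⟩ then a else ((m:ℝ)-1) * b := by
        intro j
        by_cases hj : j = ⟨0, hn0⟩
        · rw [if_pos hj]
          simp only [hg, if_pos hj]
          rw [sum_if_zero hm0]; ring
        · rw [if_neg hj]
          simp only [hg, if_neg hj]
          rw [sum_if_zero hm0]; ring
      rw [Finset.sum_congr rfl (fun j _ => hin j), sum_if_zero hn0]
    have hsum : ∑ i : Fin m, ∑ j : Fin n, ∑ k : Fin m, ∑ l : Fin n, g j k
        = (m:ℝ) * ((n:ℝ) * (a + ((n:ℝ)-1) * (((m:ℝ)-1) * b))) := by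
      have : ∀ j : Fin n, ∀ k : Fin m, ∑ l : Fin n, g j k = (n:ℝ) * g j k := by
        intro j k
        rw [Finset.sum_const, Finset.card_univ, Fintype.card_fin, nsmul_eq_mul]
      calc ∑ i : Fin m, ∑ j : Fin n, ∑ k : Fin m, ∑ l : Fin n, g j k
          = ∑ i : Fin m, ∑ j : Fin n, ∑ k : Fin m, (n:ℝ) * g j k := by
            refine Finset.sum_congr rfl fun i _ => Finset.sum_congr rfl fun j _ =>
              Finset.sum_congr rfl fun k _ => this j k
        _ = ∑ i : Fin m, (n:ℝ) * ∑ j : Fin n, ∑ k : Fin m, g j k := by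
            simp [Finset.mul_sum]
        _ = (m:ℝ) * ((n:ℝ) * (a + ((n:ℝ)-1) * (((m:ℝ)-1) * b))) := by
            rw [hcalc]; simp [Finset.sum_const, mul_comm]
    rw [hsum]
    have hgz : g ⟨0, hn0⟩ ⟨0, hm0⟩ = a := by simp [hg]
    rw [hgz]
    simp only [Finset.sum_const, Finset.card_univ, Fintype.card_fin, nsmul_eq_mul]
    rw [div_mul_eq_mul_div, one_mul]
    rw [gt_iff_lt, div_lt_iff₀ hmn]
    have ha' : a * ((m:ℝ)*n) = -2*ε := by rw [ha]; field_simp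
    have hb' : b * ((m:ℝ)*n) = -L := by rw [hb]; field_simp
    have h1 : ((m:ℝ)-1) * ((n:ℝ)-1) ≥ 1 := by nlinarith
    nlinarith [mul_pos (sub_pos.mpr (lt_of_lt_of_le one_lt_two hmr))
      (sub_pos.mpr (lt_of_lt_of_le one_lt_two hnr))]
  · refine ⟨fun _ => ⟨1, by omega⟩, fun _ => ⟨1, by omega⟩, ?_⟩
    simp only [f1, Pi.zero_apply, Finset.sum_const_zero, add_zero]
    have hgb : g ⟨1, by omega⟩ ⟨1, by omega⟩ = b := by
      simp [hg, Fin.ext_iff]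
    rw [hgb]
    simp only [Finset.sum_const, Finset.card_univ, Fintype.card_fin, nsmul_eq_mul]
    have : (m:ℝ) * ((n:ℝ) * b) = -L := by
      rw [hb]; field_simp
    rw [this]
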